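/- Determinant evaluation: for 0 < |q| < 1 and all n ∈ ℕ, B_n(t) A_{n+1}(t) − B_{n+1}(t) A_n(t) = C_n t^{2n+1}, where C_n = (q^{n+2})_{n+1} (−1)^n q^{(3n^2+n)/2} (q)_n/(q)_{2n+1}, and C_n ≠ 0. -/

import Mathlib

open Finset

/-- q-Pochhammer symbol `(a)_n = ∏_{j=0}^{n-1} (1 - a q^j)`. -/
noncomputable def qPoch (q a : ℝ) (n : ℕ) : ℝ := ∏ j ∈ Finset.range n, (1 - a * q ^ j)

/-- q-exponential `E_q(t) = ∏_{k=0}^∞ (1 - q^k t)⁻¹`. -/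
noncomputable def qExp (q t : ℝ) : ℝ := ∏' k : ℕ, (1 - q ^ k * t)⁻¹

/-- q-binomial coefficient. -/
noncomputable def qBinom (q : ℝ) (n k : ℕ) : ℝ :=
  qPoch q q n / (qPoch q q k * qPoch q q (n - k))

/-- Padé numerator polynomial `A_n(t)`. -/
noncomputable def padeA (q : ℝ) (n : ℕ) (t : ℝ) : ℝ :=
  ∑ k ∈ Finset.range (n + 1),
    qBinom q n k * q ^ (k * n) * qPoch q (q ^ (n + 1)) (n - k) * t ^ k

/-- Padé denominator polynomial `B_n(t)`. -/
noncomputable def padeB (q : ℝ) (n : ℕ) (t : ℝ) : ℝ :=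
  ∑ k ∈ Finset.range (n + 1),
    qBinom q n k * q ^ (k * (k - 1) / 2) * qPoch q (q ^ (n + 1)) (n - k) * (-t) ^ k

/-- Padé remainder `S_n(t)`. -/
noncomputable def padeS (q : ℝ) (n : ℕ) (t : ℝ) : ℝ :=
  (-1) ^ n * t ^ (2 * n + 1) * q ^ ((3 * n ^ 2 + n) / 2) *
    (qPoch q q n / qPoch q q (2 * n + 1)) *
    ∑' k : ℕ, qPoch q (q ^ (n + 1)) k * t ^ k / (qPoch q q k * qPoch q (q ^ (2 * n + 2)) k)

/- ===== auxiliary development ===== -/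

lemma qPoch_zero' (q a : ℝ) : qPoch q a 0 = 1 := by simp [qPoch]

lemma qPoch_succ' (q a : ℝ) (m : ℕ) : qPoch q a (m+1) = qPoch q a m * (1 - a * q ^ m) := by
  simp [qPoch, Finset.prod_range_succ]

lemma qPoch_q_succ (q : ℝ) (m : ℕ) : qPoch q q (m+1) = qPoch q q m * (1 - q ^ (m+1)) := by
  rw [qPoch_succ']; ring

lemma qPoch_add_one (q : ℝ) (a b : ℕ) (h : a = b + 1) :
    qPoch q q a = qPoch q q b * (1 - q ^ a) := by subst h; exact qPoch_q_succ q b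

lemma qPoch_mul (q : ℝ) (n m : ℕ) :
    qPoch q q n * qPoch q (q ^ (n+1)) m = qPoch q q (n+m) := by
  unfold qPoch
  rw [Finset.prod_range_add]
  congr 1
  exact Finset.prod_congr rfl fun j _ => by ring

lemma abs_pow_lt_one' (q : ℝ) (hq1 : |q| < 1) (k : ℕ) (hk : 1 ≤ k) : |q ^ k| < 1 := by
  rw [abs_pow]
  calc |q| ^ k ≤ |q| ^ 1 := pow_le_pow_of_le_one (abs_nonneg q) hq1.le hk
  _ = |q| := pow_one _
  _ < 1 := hq1

lemma one_sub_qpow_ne (q : ℝ) (hq1 : |q| < 1) (k : ℕ) (hk : 1 ≤ k) : 1 - q ^ k ≠ 0 := by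
  have h := abs_pow_lt_one' q hq1 k hk
  intro hc
  have : q ^ k = 1 := by linarith
  rw [this] at h; simp at h

lemma one_add_qpow_ne (q : ℝ) (hq1 : |q| < 1) (k : ℕ) (hk : 1 ≤ k) : 1 + q ^ k ≠ 0 := by
  have h := abs_pow_lt_one' q hq1 k hk
  intro hc
  have : q ^ k = -1 := by linarith
  rw [this] at h; simp at h

lemma qPoch_q_ne (q : ℝ) (hq1 : |q| < 1) (m : ℕ) : qPoch q q m ≠ 0 := by
  unfold qPoch
  apply Finset.prod_ne_zero_iff.mpr
  intro j _
  have : q * q ^ j = q ^ (j+1) := by ring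
  rw [this]
  exact one_sub_qpow_ne q hq1 (j+1) (by omega)

lemma qPoch_pow_ne (q : ℝ) (hq1 : |q| < 1) (s m : ℕ) : qPoch q (q ^ (s+1)) m ≠ 0 := by
  unfold qPoch
  apply Finset.prod_ne_zero_iff.mpr
  intro j _
  have : q ^ (s+1) * q ^ j = q ^ (s+1+j) := by ring
  rw [this]
  exact one_sub_qpow_ne q hq1 (s+1+j) (by omega)

/- coefficient functions -/
noncomputable def aco (q : ℝ) (n k : ℕ) : ℝ :=
  if k ≤ n then q ^ (k*n) * qPoch q q (2*n-k) / (qPoch q q k * qPoch q q (n-k)) else 0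

noncomputable def bco (q : ℝ) (n k : ℕ) : ℝ :=
  if k ≤ n then
    (-1)^k * q ^ (k*(k-1)/2) * qPoch q q (2*n-k) / (qPoch q q k * qPoch q q (n-k)) else 0

lemma qPoch_shift_eq (q : ℝ) (hq1 : |q| < 1) (n m : ℕ) :
    qPoch q (q ^ (n+1)) m = qPoch q q (n+m) / qPoch q q n := by
  rw [eq_div_iff (qPoch_q_ne q hq1 n), mul_comm, qPoch_mul]

lemma padeA_eq (q : ℝ) (hq1 : |q| < 1) (n : ℕ) (t : ℝ) :
    padeA q n t = ∑ k ∈ Finset.range (n+1), aco q n k * t ^ k := by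
  unfold padeA
  refine Finset.sum_congr rfl fun k hk => ?_
  have hkn : k ≤ n := by simpa [Nat.lt_succ_iff] using hk
  rw [aco, if_pos hkn, qBinom, qPoch_shift_eq q hq1]
  have h2 : n + (n - k) = 2*n - k := by omega
  rw [h2]
  have h1 := qPoch_q_ne q hq1 n
  have h3 := qPoch_q_ne q hq1 k
  have h4 := qPoch_q_ne q hq1 (n-k)
  field_simp

lemma padeB_eq (q : ℝ) (hq1 : |q| < 1) (n : ℕ) (t : ℝ) :
    padeB q n t = ∑ k ∈ Finset.range (n+1), bco q n k * t ^ k := by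
  unfold padeB
  refine Finset.sum_congr rfl fun k hk => ?_
  have hkn : k ≤ n := by simpa [Nat.lt_succ_iff] using hk
  rw [bco, if_pos hkn, qBinom, qPoch_shift_eq q hq1]
  have h2 : n + (n - k) = 2*n - k := by omega
  rw [h2, neg_pow]
  have h1 := qPoch_q_ne q hq1 n
  have h3 := qPoch_q_ne q hq1 k
  have h4 := qPoch_q_ne q hq1 (n-k)
  field_simp

noncomputable def pshift (f : ℕ → ℝ) : ℕ → ℝ
  | 0 => 0
  | (m+1) => f m

lemma pshift_sum (f : ℕ → ℝ) (N : ℕ) (t : ℝ) :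
    ∑ m ∈ Finset.range (N+1), pshift f m * t ^ m
      = t * ∑ k ∈ Finset.range N, f k * t ^ k := by
  rw [Finset.sum_range_succ', Finset.mul_sum]
  simp [pshift]
  exact Finset.sum_congr rfl fun k _ => by ring

noncomputable def uu (q : ℝ) (n : ℕ) : ℝ := (1 + q^(n+2)) * (1 - q^(2*n+3))
noncomputable def vv (q : ℝ) (n : ℕ) : ℝ := -(q^(n+1)) * (1 - q^(2*n+3)) / (1 + q^(n+1))
noncomputable def ww (q : ℝ) (n : ℕ) : ℝ := q^(3*n+2) * (1 + q^(n+2)) / (1 + q^(n+1))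

lemma frac_helper (uA vN vD a1 b1 a2 b2 a3 b3 : ℝ) (h1 : b1 ≠ 0) (h2 : b2 ≠ 0)
    (h3 : b3 ≠ 0) (hv : vD ≠ 0)
    (key : a1 * (b2*(vD*b3)) = (uA * a2 * (vD*b3) + vN*a3*b2) * b1) :
    a1 / b1 = uA * (a2 / b2) + vN / vD * (a3 / b3) := by
  rw [mul_div_assoc', div_mul_div_comm,
    div_add_div _ _ h2 (mul_ne_zero hv h3), div_eq_div_iff h1 (mul_ne_zero h2 (mul_ne_zero hv h3))]
  linear_combination key

lemma aco_of_le (q : ℝ) {n k : ℕ} (h : k ≤ n) (c e d : ℕ) (hc : 2*n-k = c) (he : n-k = e)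
    (hd : k*n = d) :
    aco q n k = q ^ d * qPoch q q c / (qPoch q q k * qPoch q q e) := by
  subst hc he hd; rw [aco, if_pos h]

lemma aco_of_gt (q : ℝ) {n k : ℕ} (h : n < k) : aco q n k = 0 := by
  rw [aco, if_neg (by omega)]

lemma bco_of_le (q : ℝ) {n k : ℕ} (h : k ≤ n) (c e d : ℕ) (hc : 2*n-k = c) (he : n-k = e)
    (hd : k*(k-1)/2 = d) :
    bco q n k = (-1)^k * q ^ d * qPoch q q c / (qPoch q q k * qPoch q q e) := by
  subst hc he hd; rw [bco, if_pos h]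

lemma bco_of_gt (q : ℝ) {n k : ℕ} (h : n < k) : bco q n k = 0 := by
  rw [bco, if_neg (by omega)]

lemma tri1 (j : ℕ) : (j+1)*((j+1)-1)/2 = j*(j-1)/2 + j := by
  rcases j with _ | c
  · norm_num
  · obtain ⟨m, hm⟩ := Nat.even_mul_succ_self c
    have e2 : (c+1+1)*((c+1+1)-1)/2 = ((c+2)*(c+1))/2 := by norm_num
    have e3 : (c+1)*((c+1)-1)/2 = ((c+1)*c)/2 := by norm_num
    rw [e2, e3]
    have e4 : (c+1)*c = m + m := by rw [← hm]; ring
    have e5 : (c+2)*(c+1) = (m+m) + 2*(c+1) := by rw [← e4]; ring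
    rw [e4, e5]
    omega

lemma tri2 (j : ℕ) : (j+2)*((j+2)-1)/2 = j*(j-1)/2 + (2*j+1) := by
  have h1 := tri1 (j+1)
  have h2 := tri1 j
  rw [show j+2 = (j+1)+1 from rfl, h1, h2]
  omega

set_option maxHeartbeats 1000000 in
lemma key_aco (q : ℝ) (hq1 : |q| < 1) (n m : ℕ) (hm : m ≤ n+2) :
    aco q (n+2) m = uu q n * aco q (n+1) m + vv q n * pshift (aco q (n+1)) m
      + ww q n * pshift (pshift (aco q n)) m := by
  have hne1 := one_add_qpow_ne q hq1 (n+1) (by omega)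
  match m with
  | 0 =>
      simp only [pshift, mul_zero, add_zero]
      rw [aco_of_le q (by omega : 0 ≤ n+2) (2*n+4) (n+2) 0 (by omega) (by omega) (by omega),
        aco_of_le q (by omega : 0 ≤ n+1) (2*n+2) (n+1) 0 (by omega) (by omega) (by omega),
        qPoch_add_one q (2*n+4) (2*n+3) (by omega), qPoch_add_one q (2*n+3) (2*n+2) (by omega),
        qPoch_add_one q (n+2) (n+1) (by omega), qPoch_zero', uu]
      have h1 := qPoch_q_ne q hq1 (2*n+2)
      have h2 := qPoch_q_ne q hq1 (n+1)
      have h3 := one_sub_qpow_ne q hq1 (n+2) (by omega)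
      field_simp
      ring
  | 1 =>
      simp only [pshift, mul_zero, add_zero]
      rw [aco_of_le q (by omega : 1 ≤ n+2) (2*n+3) (n+1) (n+2) (by omega) (by omega) (by omega),
        aco_of_le q (by omega : 1 ≤ n+1) (2*n+1) n (n+1) (by omega) (by omega) (by omega),
        aco_of_le q (by omega : 0 ≤ n+1) (2*n+2) (n+1) 0 (by omega) (by omega) (by omega),
        qPoch_add_one q (2*n+3) (2*n+2) (by omega), qPoch_add_one q (2*n+2) (2*n+1) (by omega),
        qPoch_add_one q (n+1) n (by omega), qPoch_add_one q 1 0 (by omega),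
        qPoch_zero', uu, vv]
      have h1 := qPoch_q_ne q hq1 (2*n+1)
      have h2 := qPoch_q_ne q hq1 n
      have h3 := one_sub_qpow_ne q hq1 (n+1) (by omega)
      have h4 := one_sub_qpow_ne q hq1 1 (by omega)
      refine frac_helper _ _ _ _ _ _ _ _ _ ?_ ?_ ?_ hne1 ?_
      · exact mul_ne_zero (mul_ne_zero one_ne_zero h4) (mul_ne_zero h2 h3)
      · exact mul_ne_zero (mul_ne_zero one_ne_zero h4) h2
      · exact mul_ne_zero one_ne_zero (mul_ne_zero h2 h3)
      · ring
  | (j+2) =>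
      rcases Nat.lt_or_ge j n with hlt | hge
      · obtain ⟨d, rfl⟩ : ∃ d, n = j+1+d := ⟨n-j-1, by omega⟩
        simp only [pshift]
        rw [aco_of_le q (by omega : j+2 ≤ (j+1+d)+2) (j+2*d+4) (d+1) ((j+2)*(j+d+3))
              (by omega) (by omega) (by ring),
          aco_of_le q (by omega : j+2 ≤ (j+1+d)+1) (j+2*d+2) d ((j+2)*(j+d+2))
              (by omega) (by omega) (by ring),
          aco_of_le q (by omega : j+1 ≤ (j+1+d)+1) (j+2*d+3) (d+1) ((j+1)*(j+d+2))
              (by omega) (by omega) (by ring),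
          aco_of_le q (by omega : j ≤ j+1+d) (j+2*d+2) (d+1) (j*(j+d+1))
              (by omega) (by omega) (by ring),
          qPoch_add_one q (j+2*d+4) (j+2*d+3) (by omega),
          qPoch_add_one q (j+2*d+3) (j+2*d+2) (by omega),
          qPoch_add_one q (j+2) (j+1) (by omega),
          qPoch_add_one q (j+1) j (by omega),
          qPoch_add_one q (d+1) d (by omega), uu, vv, ww]
        have h1 := qPoch_q_ne q hq1 (j+2*d+2)
        have h2 := qPoch_q_ne q hq1 j
        have h3 := qPoch_q_ne q hq1 d
        have h4 := one_sub_qpow_ne q hq1 (j+1) (by omega)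
        have h5 := one_sub_qpow_ne q hq1 (j+2) (by omega)
        have h6 := one_sub_qpow_ne q hq1 (d+1) (by omega)
        field_simp
        ring
      · have hjn : j = n := by omega
        subst hjn
        simp only [pshift]
        rw [aco_of_le q (le_refl (j+2)) (j+2) 0 ((j+2)*(j+2)) (by omega) (by omega) (by ring),
          aco_of_gt q (by omega : j+1 < j+2),
          aco_of_le q (le_refl (j+1)) (j+1) 0 ((j+1)*(j+1)) (by omega) (by omega) (by ring),
          aco_of_le q (le_refl j) j 0 (j*j) (by omega) (by omega) (by ring),
          qPoch_zero', uu, vv, ww]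
        have h1 := qPoch_q_ne q hq1 (j+2)
        have h2 := qPoch_q_ne q hq1 (j+1)
        have h3 := qPoch_q_ne q hq1 j
        field_simp
        ring

set_option maxHeartbeats 1000000 in
lemma key_bco (q : ℝ) (hq1 : |q| < 1) (n m : ℕ) (hm : m ≤ n+2) :
    bco q (n+2) m = uu q n * bco q (n+1) m + vv q n * pshift (bco q (n+1)) m
      + ww q n * pshift (pshift (bco q n)) m := by
  have hne1 := one_add_qpow_ne q hq1 (n+1) (by omega)
  match m with
  | 0 =>
      simp only [pshift, mul_zero, add_zero]
      rw [bco_of_le q (by omega : 0 ≤ n+2) (2*n+4) (n+2) 0 (by omega) (by omega) (by omega),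
        bco_of_le q (by omega : 0 ≤ n+1) (2*n+2) (n+1) 0 (by omega) (by omega) (by omega),
        qPoch_add_one q (2*n+4) (2*n+3) (by omega), qPoch_add_one q (2*n+3) (2*n+2) (by omega),
        qPoch_add_one q (n+2) (n+1) (by omega), qPoch_zero', uu]
      have h1 := qPoch_q_ne q hq1 (2*n+2)
      have h2 := qPoch_q_ne q hq1 (n+1)
      have h3 := one_sub_qpow_ne q hq1 (n+2) (by omega)
      field_simp
      ring
  | 1 =>
      simp only [pshift, mul_zero, add_zero]
      rw [bco_of_le q (by omega : 1 ≤ n+2) (2*n+3) (n+1) 0 (by omega) (by omega) (by omega),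
        bco_of_le q (by omega : 1 ≤ n+1) (2*n+1) n 0 (by omega) (by omega) (by omega),
        bco_of_le q (by omega : 0 ≤ n+1) (2*n+2) (n+1) 0 (by omega) (by omega) (by omega),
        qPoch_add_one q (2*n+3) (2*n+2) (by omega), qPoch_add_one q (2*n+2) (2*n+1) (by omega),
        qPoch_add_one q (n+1) n (by omega), qPoch_add_one q 1 0 (by omega),
        qPoch_zero', uu]
      have h1 := qPoch_q_ne q hq1 (2*n+1)
      have h2 := qPoch_q_ne q hq1 n
      have h3 := one_sub_qpow_ne q hq1 (n+1) (by omega)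
      have h4 := one_sub_qpow_ne q hq1 1 (by omega)
      refine frac_helper _ _ _ _ _ _ _ _ _ ?_ ?_ ?_ hne1 ?_
      · exact mul_ne_zero (mul_ne_zero one_ne_zero h4) (mul_ne_zero h2 h3)
      · exact mul_ne_zero (mul_ne_zero one_ne_zero h4) h2
      · exact mul_ne_zero one_ne_zero (mul_ne_zero h2 h3)
      · ring
  | (j+2) =>
      rcases Nat.lt_or_ge j n with hlt | hge
      · obtain ⟨d, rfl⟩ : ∃ d, n = j+1+d := ⟨n-j-1, by omega⟩
        simp only [pshift]
        rw [bco_of_le q (by omega : j+2 ≤ (j+1+d)+2) (j+2*d+4) (d+1) (j*(j-1)/2 + (2*j+1))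
              (by omega) (by omega) (tri2 j),
          bco_of_le q (by omega : j+2 ≤ (j+1+d)+1) (j+2*d+2) d (j*(j-1)/2 + (2*j+1))
              (by omega) (by omega) (tri2 j),
          bco_of_le q (by omega : j+1 ≤ (j+1+d)+1) (j+2*d+3) (d+1) (j*(j-1)/2 + j)
              (by omega) (by omega) (tri1 j),
          bco_of_le q (by omega : j ≤ j+1+d) (j+2*d+2) (d+1) (j*(j-1)/2)
              (by omega) (by omega) rfl,
          qPoch_add_one q (j+2*d+4) (j+2*d+3) (by omega),
          qPoch_add_one q (j+2*d+3) (j+2*d+2) (by omega),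
          qPoch_add_one q (j+2) (j+1) (by omega),
          qPoch_add_one q (j+1) j (by omega),
          qPoch_add_one q (d+1) d (by omega), uu, vv, ww]
        have h1 := qPoch_q_ne q hq1 (j+2*d+2)
        have h2 := qPoch_q_ne q hq1 j
        have h3 := qPoch_q_ne q hq1 d
        have h4 := one_sub_qpow_ne q hq1 (j+1) (by omega)
        have h5 := one_sub_qpow_ne q hq1 (j+2) (by omega)
        have h6 := one_sub_qpow_ne q hq1 (d+1) (by omega)
        field_simp
        ring
      · have hjn : j = n := by omega
        subst hjn
        simp only [pshift]
        rw [bco_of_le q (le_refl (j+2)) (j+2) 0 (j*(j-1)/2 + (2*j+1))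
              (by omega) (by omega) (tri2 j),
          bco_of_gt q (by omega : j+1 < j+2),
          bco_of_le q (le_refl (j+1)) (j+1) 0 (j*(j-1)/2 + j) (by omega) (by omega) (tri1 j),
          bco_of_le q (le_refl j) j 0 (j*(j-1)/2) (by omega) (by omega) rfl,
          qPoch_zero', uu, vv, ww]
        have h1 := qPoch_q_ne q hq1 (j+2)
        have h2 := qPoch_q_ne q hq1 (j+1)
        have h3 := qPoch_q_ne q hq1 j
        field_simp
        ring

lemma recA (q : ℝ) (hq1 : |q| < 1) (n : ℕ) (t : ℝ) :
    padeA q (n+2) t = (uu q n + vv q n * t) * padeA q (n+1) t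
      + ww q n * t^2 * padeA q n t := by
  rw [padeA_eq q hq1 (n+2), padeA_eq q hq1 (n+1), padeA_eq q hq1 n]
  have step : ∀ m ∈ Finset.range (n+2+1), aco q (n+2) m * t^m
      = uu q n * (aco q (n+1) m * t^m) + vv q n * (pshift (aco q (n+1)) m * t^m)
        + ww q n * (pshift (pshift (aco q n)) m * t^m) := by
    intro m hm
    rw [key_aco q hq1 n m (by have := Finset.mem_range.mp hm; omega)]
    ring
  rw [Finset.sum_congr rfl step, Finset.sum_add_distrib, Finset.sum_add_distrib,
    ← Finset.mul_sum, ← Finset.mul_sum, ← Finset.mul_sum]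
  have s1 : ∑ m ∈ Finset.range (n+2+1), aco q (n+1) m * t^m
      = ∑ m ∈ Finset.range (n+1+1), aco q (n+1) m * t^m := by
    rw [Finset.sum_range_succ, aco_of_gt q (by omega), zero_mul, add_zero]
  have s2 : ∑ m ∈ Finset.range (n+2+1), pshift (aco q (n+1)) m * t^m
      = t * ∑ m ∈ Finset.range (n+1+1), aco q (n+1) m * t^m := pshift_sum _ _ _
  have s3 : ∑ m ∈ Finset.range (n+2+1), pshift (pshift (aco q n)) m * t^m
      = t * (t * ∑ m ∈ Finset.range (n+1), aco q n m * t^m) := by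
    rw [pshift_sum, pshift_sum]
  rw [s1, s2, s3]; ring

lemma recB (q : ℝ) (hq1 : |q| < 1) (n : ℕ) (t : ℝ) :
    padeB q (n+2) t = (uu q n + vv q n * t) * padeB q (n+1) t
      + ww q n * t^2 * padeB q n t := by
  rw [padeB_eq q hq1 (n+2), padeB_eq q hq1 (n+1), padeB_eq q hq1 n]
  have step : ∀ m ∈ Finset.range (n+2+1), bco q (n+2) m * t^m
      = uu q n * (bco q (n+1) m * t^m) + vv q n * (pshift (bco q (n+1)) m * t^m)
        + ww q n * (pshift (pshift (bco q n)) m * t^m) := by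
    intro m hm
    rw [key_bco q hq1 n m (by have := Finset.mem_range.mp hm; omega)]
    ring
  rw [Finset.sum_congr rfl step, Finset.sum_add_distrib, Finset.sum_add_distrib,
    ← Finset.mul_sum, ← Finset.mul_sum, ← Finset.mul_sum]
  have s1 : ∑ m ∈ Finset.range (n+2+1), bco q (n+1) m * t^m
      = ∑ m ∈ Finset.range (n+1+1), bco q (n+1) m * t^m := by
    rw [Finset.sum_range_succ, bco_of_gt q (by omega), zero_mul, add_zero]
  have s2 : ∑ m ∈ Finset.range (n+2+1), pshift (bco q (n+1)) m * t^m
      = t * ∑ m ∈ Finset.range (n+1+1), bco q (n+1) m * t^m := pshift_sum _ _ _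
  have s3 : ∑ m ∈ Finset.range (n+2+1), pshift (pshift (bco q n)) m * t^m
      = t * (t * ∑ m ∈ Finset.range (n+1), bco q n m * t^m) := by
    rw [pshift_sum, pshift_sum]
  rw [s1, s2, s3]; ring

noncomputable def Cc (q : ℝ) (n : ℕ) : ℝ :=
  qPoch q (q ^ (n + 2)) (n + 1) * (-1) ^ n * q ^ ((3 * n ^ 2 + n) / 2) *
    (qPoch q q n / qPoch q q (2 * n + 1))

lemma Ediff (n : ℕ) : (3*(n+1)^2+(n+1))/2 = (3*n^2+n)/2 + (3*n+2) := by
  obtain ⟨c, hc⟩ := Nat.even_mul_succ_self n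
  have e1 : 3*n^2+n = (c+c) + 2*n^2 := by rw [← hc]; ring
  have e2 : 3*(n+1)^2+(n+1) = ((c+c) + 2*n^2) + (6*n+4) := by rw [← hc]; ring
  rw [e1, e2]
  generalize n^2 = s
  omega


lemma qPoch_one' (q a : ℝ) : qPoch q a 1 = 1 - a := by simp [qPoch]

lemma Cc_succ (q : ℝ) (hq1 : |q| < 1) (n : ℕ) :
    Cc q (n+1) = -(ww q n) * Cc q n := by
  have hp1 := qPoch_shift_eq q hq1 (n+2) (n+2)
  rw [show (n+2)+(n+2) = 2*n+4 by omega, show (n+2)+1 = n+3 by omega] at hp1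
  have hp0 := qPoch_shift_eq q hq1 (n+1) (n+1)
  rw [show (n+1)+(n+1) = 2*n+2 by omega, show (n+1)+1 = n+2 by omega] at hp0
  have h1 := qPoch_q_ne q hq1 (2*n+1)
  have h2 := qPoch_q_ne q hq1 n
  have h1' := qPoch_q_ne q hq1 (2*n+3)
  have h2' := qPoch_q_ne q hq1 (n+2)
  have h1'' := qPoch_q_ne q hq1 (2*n+2)
  have h2'' := qPoch_q_ne q hq1 (n+1)
  have h8 := one_add_qpow_ne q hq1 (n+1) (by omega)
  have L : Cc q (n+1) = (qPoch q q (2*n+4) * (-1)^(n+1) * q^((3*(n+1)^2+(n+1))/2)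
      * qPoch q q (n+1)) / (qPoch q q (n+2) * qPoch q q (2*n+3)) := by
    unfold Cc
    rw [show n+1+2 = n+3 by omega, show n+1+1 = n+2 by omega,
      show 2*(n+1)+1 = 2*n+3 by omega, hp1]
    field_simp
  have R : -(ww q n) * Cc q n = -(q^(3*n+2) * (1+q^(n+2)) * qPoch q q (2*n+2) * (-1)^n
      * q^((3*n^2+n)/2) * qPoch q q n)
      / ((1+q^(n+1)) * (qPoch q q (n+1) * qPoch q q (2*n+1))) := by
    unfold ww Cc
    rw [hp0]
    field_simp
  rw [L, R, div_eq_div_iff (mul_ne_zero h2' h1') (mul_ne_zero h8 (mul_ne_zero h2'' h1)),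
    Ediff n, pow_add,
    qPoch_add_one q (2*n+4) (2*n+3) (by omega), qPoch_add_one q (2*n+3) (2*n+2) (by omega),
    qPoch_add_one q (2*n+2) (2*n+1) (by omega),
    qPoch_add_one q (n+2) (n+1) (by omega), qPoch_add_one q (n+1) n (by omega), pow_succ]
  ring

theorem det_lemma (q : ℝ) (hq1 : |q| < 1) (n : ℕ) (t : ℝ) :
    padeB q n t * padeA q (n+1) t - padeB q (n+1) t * padeA q n t
      = Cc q n * t ^ (2*n+1) := by
  induction n generalizing t with
  | zero =>
      have h4 := one_sub_qpow_ne q hq1 1 (by omega)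
      simp [padeA, padeB, qBinom, Finset.sum_range_succ, Finset.sum_range_zero,
        qPoch_zero', qPoch_one', Cc]
      field_simp
      ring
  | succ n ih =>
      show padeB q (n+1) t * padeA q (n+2) t - padeB q (n+2) t * padeA q (n+1) t
        = Cc q (n+1) * t ^ (2*(n+1)+1)
      calc padeB q (n+1) t * padeA q (n+2) t - padeB q (n+2) t * padeA q (n+1) t
          = -(ww q n) * t^2
              * (padeB q n t * padeA q (n+1) t - padeB q (n+1) t * padeA q n t) := by
            rw [recA q hq1 n t, recB q hq1 n t]; ring
        _ = -(ww q n) * t^2 * (Cc q n * t^(2*n+1)) := by rw [ih t]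
        _ = Cc q (n+1) * t ^ (2*(n+1)+1) := by rw [Cc_succ q hq1 n]; ring

lemma Cc_ne (q : ℝ) (hq0 : 0 < |q|) (hq1 : |q| < 1) (n : ℕ) : Cc q n ≠ 0 := by
  have hp : qPoch q (q ^ (n+2)) (n+1) ≠ 0 := by
    have := qPoch_pow_ne q hq1 (n+1) (n+1)
    rwa [show (n+1)+1 = n+2 by omega] at this
  exact mul_ne_zero (mul_ne_zero (mul_ne_zero hp (pow_ne_zero _ (by norm_num)))
    (pow_ne_zero _ (abs_pos.mp hq0)))
    (div_ne_zero (qPoch_q_ne q hq1 n) (qPoch_q_ne q hq1 (2*n+1)))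

/-- determinant evaluation
`B_n(t) A_{n+1}(t) - B_{n+1}(t) A_n(t) = C_n t^{2n+1}` with `C_n ≠ 0`. -/
theorem pade_determinant (q : ℝ) (hq0 : 0 < |q|) (hq1 : |q| < 1) (n : ℕ) :
    (∀ t : ℝ, padeB q n t * padeA q (n + 1) t - padeB q (n + 1) t * padeA q n t
        = (qPoch q (q ^ (n + 2)) (n + 1) * (-1) ^ n * q ^ ((3 * n ^ 2 + n) / 2) *
            (qPoch q q n / qPoch q q (2 * n + 1))) * t ^ (2 * n + 1)) ∧
      qPoch q (q ^ (n + 2)) (n + 1) * (-1) ^ n * q ^ ((3 * n ^ 2 + n) / 2) *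
        (qPoch q q n / qPoch q q (2 * n + 1)) ≠ 0 := by
  exact ⟨fun t => det_lemma q hq1 n t, Cc_ne q hq0 hq1 n⟩
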